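/- Let (A, B, C) be a positive solution of the backward normalized Ricci flow ODE system (⋆⋆) on an interval I, and define b = B/A and c = C/A on I. Then b and c satisfy db/dt = 2A² b(1+b)(b−c−1) and dc/dt = −2A² c(1+c)(b−c+1) on I. -/

import Mathlib

open Real Filter Set Topology

/-- Right-hand side of the backward normalized Ricci flow ODE (⋆⋆) for `A`. -/
noncomputable def bricciA (A B C : ℝ) : ℝ :=
  -((2 / 3) * (-A ^ 2 * (2 * A + B + C) + A * (B - C) ^ 2))

/-- Right-hand side of the backward normalized Ricci flow ODE (⋆⋆) for `B`. -/
noncomputable def bricciB (A B C : ℝ) : ℝ :=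
  -((2 / 3) * (-B ^ 2 * (2 * B + A - C) + B * (A + C) ^ 2))

/-- Right-hand side of the backward normalized Ricci flow ODE (⋆⋆) for `C`. -/
noncomputable def bricciC (A B C : ℝ) : ℝ :=
  -((2 / 3) * (-C ^ 2 * (2 * C + A - B) + C * (A + B) ^ 2))

/-- `(A, B, C)` is a positive solution of the backward normalized Ricci flow ODE system (⋆⋆)
on the set `I`. -/
def IsBackwardRicciSolOn (A B C : ℝ → ℝ) (I : Set ℝ) : Prop :=
  ∀ t ∈ I, 0 < A t ∧ 0 < B t ∧ 0 < C t ∧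
    HasDerivAt A (bricciA (A t) (B t) (C t)) t ∧
    HasDerivAt B (bricciB (A t) (B t) (C t)) t ∧
    HasDerivAt C (bricciC (A t) (B t) (C t)) t

/-- Projectivization of the backward normalized Ricci flow (⋆⋆): the ratios `b = B/A` and
`c = C/A` satisfy `db/dt = 2A²b(1+b)(b-c-1)` and `dc/dt = -2A²c(1+c)(b-c+1)`. -/
theorem backward_ricci_ratio_ode (A B C : ℝ → ℝ) (I : Set ℝ)
    (hsol : IsBackwardRicciSolOn A B C I) :
    ∀ t ∈ I,
      HasDerivAt (fun s => B s / A s)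
        (2 * (A t) ^ 2 * (B t / A t) * (1 + B t / A t) * (B t / A t - C t / A t - 1)) t ∧
      HasDerivAt (fun s => C s / A s)
        (-(2 * (A t) ^ 2) * (C t / A t) * (1 + C t / A t) * (B t / A t - C t / A t + 1)) t := by
  intro t ht
  obtain ⟨hA, hB, hC, hA', hB', hC'⟩ := hsol t ht
  constructor
  · have h : HasDerivAt (fun s => B s / A s) _ t := hB'.div hA' hA.ne'
    convert h using 1
    rw [bricciA, bricciB]
    field_simp
    ring
  · have h : HasDerivAt (fun s => C s / A s) _ t := hC'.div hA' hA.ne'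
    convert h using 1
    rw [bricciA, bricciC]
    field_simp
    ring
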